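/- For every t ∈ ℝ, the function M_t is entire, i.e., complex differentiable at every point of ℂ. -/

import Mathlib

open MeasureTheory

/-- `G x = Σ_{m=1}^∞ (2π²m⁴ e^{9x} − 3πm² e^{5x}) e^{−πm² e^{4x}}`. -/
noncomputable def G (x : ℝ) : ℝ :=
  ∑' m : ℕ, (2 * Real.pi ^ 2 * ((m : ℝ) + 1) ^ 4 * Real.exp (9 * x)
      - 3 * Real.pi * ((m : ℝ) + 1) ^ 2 * Real.exp (5 * x))
    * Real.exp (-(Real.pi * ((m : ℝ) + 1) ^ 2 * Real.exp (4 * x)))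

/-- `M t τ = ∫₀^∞ e^{−t x²} G x cosh (τ x) dx`. -/
noncomputable def M (t : ℝ) (τ : ℂ) : ℂ :=
  ∫ x in Set.Ioi (0 : ℝ),
    ((Real.exp (-(t * x ^ 2)) * G x : ℝ) : ℂ) * Complex.cosh (τ * (x : ℂ))

/-- `Ξ t λ = ∫₀^∞ e^{−t x²} G x cos (λ x) dx`. -/
noncomputable def Xi (t : ℝ) (l : ℂ) : ℂ :=
  ∫ x in Set.Ioi (0 : ℝ),
    ((Real.exp (-(t * x ^ 2)) * G x : ℝ) : ℂ) * Complex.cos (l * (x : ℂ))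

/-- `α t γ = (1/(2γ)!) ∫₀^∞ e^{−t x²} G x x^{2γ} dx`. -/
noncomputable def α (t : ℝ) (γ : ℕ) : ℝ :=
  (1 / (Nat.factorial (2 * γ) : ℝ)) *
    ∫ x in Set.Ioi (0 : ℝ), Real.exp (-(t * x ^ 2)) * G x * x ^ (2 * γ)

open Real in
noncomputable def Gterm (n : ℕ) (x : ℝ) : ℝ :=
  (2 * Real.pi ^ 2 * ((n : ℝ) + 1) ^ 4 * Real.exp (9 * x)
      - 3 * Real.pi * ((n : ℝ) + 1) ^ 2 * Real.exp (5 * x))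
    * Real.exp (-(Real.pi * ((n : ℝ) + 1) ^ 2 * Real.exp (4 * x)))

lemma G_eq (x : ℝ) : G x = ∑' n, Gterm n x := rfl

-- generic: exp(-(c*(n+1)^2)) ≤ exp(-c) * exp(-c)^n  for c > 0
lemma exp_sq_le (n : ℕ) {c : ℝ} (hc : 0 < c) :
    Real.exp (-(c * ((n : ℝ) + 1) ^ 2)) ≤ Real.exp (-c) * Real.exp (-c) ^ n := by
  have h1 : Real.exp (-c) * Real.exp (-c) ^ n = Real.exp (-(c * ((n : ℝ) + 1))) := by
    rw [← Real.exp_nat_mul, ← Real.exp_add]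
    push_cast; ring_nf
  rw [h1]
  apply Real.exp_le_exp.2
  have hn : (0 : ℝ) ≤ (n : ℝ) := n.cast_nonneg
  nlinarith [mul_nonneg hc.le hn, mul_nonneg (mul_nonneg hc.le hn) hn]

noncomputable def cseq (n : ℕ) : ℝ :=
  ((n : ℝ) + 1) ^ 4 * Real.exp (-(Real.pi * (((n : ℝ) + 1) ^ 2 - 1)))

noncomputable def CG : ℝ := (2 * Real.pi ^ 2 + 3 * Real.pi) * ∑' n, cseq n

lemma summable_aux' {r : ℝ} (h0 : 0 ≤ r) (h1 : r < 1) :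
    Summable (fun n : ℕ => ((n : ℝ) + 1) ^ 4 * r ^ n) := by
  have h := summable_pow_mul_geometric_of_norm_lt_one (R := ℝ) 4
    (by rwa [Real.norm_eq_abs, abs_of_nonneg h0])
  have hs : Summable (fun n : ℕ => (16 * (n : ℝ) ^ 4 + 16) * r ^ n) := by
    simpa [add_mul, mul_assoc] using
      (h.mul_left 16).add ((summable_geometric_of_lt_one h0 h1).mul_left 16)
  refine hs.of_nonneg_of_le (fun n => by positivity) (fun n => ?_)
  have hn : ((n : ℝ) + 1) ^ 4 ≤ 16 * (n : ℝ) ^ 4 + 16 := by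
    rcases Nat.eq_zero_or_pos n with h | h
    · subst h; norm_num
    · have h1n : (1 : ℝ) ≤ n := by exact_mod_cast h
      nlinarith [sq_nonneg ((n:ℝ) - 1), sq_nonneg ((n:ℝ)^2 - 1)]
  exact mul_le_mul_of_nonneg_right hn (pow_nonneg h0 n)

lemma summable_cseq : Summable cseq := by
  have hr0 : (0:ℝ) ≤ Real.exp (-Real.pi) := (Real.exp_pos _).le
  have hr1 : Real.exp (-Real.pi) < 1 := Real.exp_lt_one_iff.2 (neg_lt_zero.2 Real.pi_pos)
  refine ((summable_aux' hr0 hr1).of_nonneg_of_le (fun n => by unfold cseq; positivity) (fun n => ?_))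
  unfold cseq
  have h : Real.exp (-(Real.pi * (((n : ℝ) + 1) ^ 2 - 1))) ≤ Real.exp (-Real.pi) ^ n := by
    rw [← Real.exp_nat_mul]
    apply Real.exp_le_exp.2
    have hn : (0:ℝ) ≤ (n : ℝ) := n.cast_nonneg
    have := Real.pi_pos
    nlinarith [mul_nonneg this.le hn, mul_nonneg (mul_nonneg this.le hn) hn]
  exact mul_le_mul_of_nonneg_left h (by positivity)

lemma Gterm_bound {x : ℝ} (hx : 0 ≤ x) (n : ℕ) :
    ‖Gterm n x‖ ≤ ((2 * Real.pi ^ 2 + 3 * Real.pi)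
      * Real.exp (9 * x - Real.pi * Real.exp (4 * x))) * cseq n := by
  set N : ℝ := (n : ℝ) + 1 with hNdef
  have hN1 : (1:ℝ) ≤ N := by rw [hNdef]; linarith [(n.cast_nonneg : (0:ℝ) ≤ (n:ℝ))]
  have hN0 : (0:ℝ) ≤ N := by linarith
  have hsq : (0:ℝ) ≤ N ^ 2 - 1 := by nlinarith
  have hN2 : N ^ 2 ≤ N ^ 4 := by nlinarith [mul_nonneg (sq_nonneg N) hsq]
  have hE : (1:ℝ) ≤ Real.exp (4 * x) := Real.one_le_exp (by linarith)
  have h59 : Real.exp (5 * x) ≤ Real.exp (9 * x) := Real.exp_le_exp.2 (by linarith)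
  have hpi := Real.pi_pos
  have key : Real.exp (-(Real.pi * N ^ 2 * Real.exp (4 * x))) ≤
      Real.exp (-(Real.pi * Real.exp (4 * x))) * Real.exp (-(Real.pi * (N ^ 2 - 1))) := by
    rw [← Real.exp_add]
    apply Real.exp_le_exp.2
    have hk : (0:ℝ) ≤ N ^ 2 - 1 := by nlinarith
    nlinarith [mul_nonneg (mul_nonneg hpi.le hk) (sub_nonneg.2 hE)]
  have habs : |2 * Real.pi ^ 2 * N ^ 4 * Real.exp (9 * x)
      - 3 * Real.pi * N ^ 2 * Real.exp (5 * x)|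
      ≤ (2 * Real.pi ^ 2 + 3 * Real.pi) * N ^ 4 * Real.exp (9 * x) := by
    have e9 := Real.exp_pos (9 * x)
    have e5 := Real.exp_pos (5 * x)
    have hmono : 3 * Real.pi * N ^ 2 * Real.exp (5 * x)
        ≤ 3 * Real.pi * N ^ 4 * Real.exp (9 * x) := by
      apply mul_le_mul _ h59 (Real.exp_nonneg _) (by positivity)
      nlinarith
    refine abs_le.2 ⟨?_, ?_⟩
    · nlinarith [hmono, (by positivity : (0:ℝ) ≤ 2 * Real.pi ^ 2 * N ^ 4 * Real.exp (9 * x))]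
    · nlinarith [(by positivity : (0:ℝ) ≤ 3 * Real.pi * N ^ 2 * Real.exp (5 * x)),
        (by positivity : (0:ℝ) ≤ 3 * Real.pi * N ^ 4 * Real.exp (9 * x))]
  have hGeq : ‖Gterm n x‖ = |2 * Real.pi ^ 2 * N ^ 4 * Real.exp (9 * x)
      - 3 * Real.pi * N ^ 2 * Real.exp (5 * x)| * Real.exp (-(Real.pi * N ^ 2 * Real.exp (4 * x))) := by
    rw [Gterm, Real.norm_eq_abs, abs_mul, Real.abs_exp]
  rw [hGeq]
  calc |2 * Real.pi ^ 2 * N ^ 4 * Real.exp (9 * x) - 3 * Real.pi * N ^ 2 * Real.exp (5 * x)|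
        * Real.exp (-(Real.pi * N ^ 2 * Real.exp (4 * x)))
      ≤ ((2 * Real.pi ^ 2 + 3 * Real.pi) * N ^ 4 * Real.exp (9 * x))
        * (Real.exp (-(Real.pi * Real.exp (4 * x))) * Real.exp (-(Real.pi * (N ^ 2 - 1)))) := by
        apply mul_le_mul habs key (Real.exp_nonneg _) (by positivity)
    _ = ((2 * Real.pi ^ 2 + 3 * Real.pi) * Real.exp (9 * x - Real.pi * Real.exp (4 * x))) * cseq n := by
        rw [show 9 * x - Real.pi * Real.exp (4 * x)
          = 9 * x + -(Real.pi * Real.exp (4 * x)) by ring, Real.exp_add, cseq]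
        ring

lemma G_norm_summable (x : ℝ) : Summable (fun n => ‖Gterm n x‖) := by
  have hc : (0:ℝ) < Real.pi * Real.exp (4 * x) := by positivity
  set r : ℝ := Real.exp (-(Real.pi * Real.exp (4 * x))) with hr
  have hr0 : (0:ℝ) ≤ r := (Real.exp_pos _).le
  have hr1 : r < 1 := Real.exp_lt_one_iff.2 (neg_lt_zero.2 hc)
  have hsum : Summable (fun n : ℕ =>
      ((2 * Real.pi ^ 2 * Real.exp (9 * x) + 3 * Real.pi * Real.exp (5 * x)) * r)
        * (((n : ℝ) + 1) ^ 4 * r ^ n)) := (summable_aux' hr0 hr1).mul_left _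
  refine hsum.of_nonneg_of_le (fun n => norm_nonneg _) (fun n => ?_)
  set N : ℝ := (n : ℝ) + 1 with hNdef
  have hN1 : (1:ℝ) ≤ N := by rw [hNdef]; linarith [(n.cast_nonneg : (0:ℝ) ≤ (n:ℝ))]
  have hsq : (0:ℝ) ≤ N ^ 2 - 1 := by nlinarith
  have hN2 : N ^ 2 ≤ N ^ 4 := by nlinarith [mul_nonneg (sq_nonneg N) hsq]
  have hpi := Real.pi_pos
  have e9 := Real.exp_pos (9 * x)
  have e5 := Real.exp_pos (5 * x)
  have key : Real.exp (-(Real.pi * N ^ 2 * Real.exp (4 * x))) ≤ r * r ^ n := by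
    have := exp_sq_le n hc
    rw [show Real.pi * Real.exp (4 * x) * N ^ 2 = Real.pi * N ^ 2 * Real.exp (4 * x) by ring] at this
    exact this
  have habs : |2 * Real.pi ^ 2 * N ^ 4 * Real.exp (9 * x)
      - 3 * Real.pi * N ^ 2 * Real.exp (5 * x)|
      ≤ (2 * Real.pi ^ 2 * Real.exp (9 * x) + 3 * Real.pi * Real.exp (5 * x)) * N ^ 4 := by
    refine abs_le.2 ⟨?_, ?_⟩
    · nlinarith [mul_le_mul_of_nonneg_right hN2 (by positivity : (0:ℝ) ≤ 3 * Real.pi * Real.exp (5*x)),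
        (by positivity : (0:ℝ) ≤ 2 * Real.pi ^ 2 * N ^ 4 * Real.exp (9 * x))]
    · nlinarith [(by positivity : (0:ℝ) ≤ 3 * Real.pi * N ^ 2 * Real.exp (5 * x)),
        (by positivity : (0:ℝ) ≤ 3 * Real.pi * N ^ 4 * Real.exp (5 * x)),
        (by positivity : (0:ℝ) ≤ 2 * Real.pi ^ 2 * N ^ 4 * Real.exp (9 * x))]
  have hGeq : ‖Gterm n x‖ = |2 * Real.pi ^ 2 * N ^ 4 * Real.exp (9 * x)
      - 3 * Real.pi * N ^ 2 * Real.exp (5 * x)| * Real.exp (-(Real.pi * N ^ 2 * Real.exp (4 * x))) := by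
    rw [Gterm, Real.norm_eq_abs, abs_mul, Real.abs_exp]
  rw [hGeq]
  calc |2 * Real.pi ^ 2 * N ^ 4 * Real.exp (9 * x) - 3 * Real.pi * N ^ 2 * Real.exp (5 * x)|
        * Real.exp (-(Real.pi * N ^ 2 * Real.exp (4 * x)))
      ≤ ((2 * Real.pi ^ 2 * Real.exp (9 * x) + 3 * Real.pi * Real.exp (5 * x)) * N ^ 4)
        * (r * r ^ n) := mul_le_mul habs key (Real.exp_nonneg _) (by positivity)
    _ = ((2 * Real.pi ^ 2 * Real.exp (9 * x) + 3 * Real.pi * Real.exp (5 * x)) * r)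
        * (N ^ 4 * r ^ n) := by ring

lemma G_summable (x : ℝ) : Summable (fun n => Gterm n x) := (G_norm_summable x).of_norm

lemma G_bound {x : ℝ} (hx : 0 ≤ x) :
    |G x| ≤ CG * Real.exp (9 * x - Real.pi * Real.exp (4 * x)) := by
  have h1 : |G x| ≤ ∑' n, ‖Gterm n x‖ := by
    rw [G_eq, ← Real.norm_eq_abs]
    exact norm_tsum_le_tsum_norm (G_norm_summable x)
  have h2 : ∑' n, ‖Gterm n x‖ ≤ ∑' n, ((2 * Real.pi ^ 2 + 3 * Real.pi)
      * Real.exp (9 * x - Real.pi * Real.exp (4 * x))) * cseq n :=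
    Summable.tsum_le_tsum (fun n => Gterm_bound hx n) (G_norm_summable x) (summable_cseq.mul_left _)
  rw [tsum_mul_left] at h2
  calc |G x| ≤ _ := h1
    _ ≤ _ := h2
    _ = CG * Real.exp (9 * x - Real.pi * Real.exp (4 * x)) := by rw [CG]; ring

lemma CG_nonneg : 0 ≤ CG := by
  have := Real.pi_pos
  exact mul_nonneg (by positivity) (tsum_nonneg (fun n => by unfold cseq; positivity))

lemma G_measurable : Measurable G := by
  apply measurable_of_tendsto_metrizable
    (f := fun N x => ∑ n ∈ Finset.range N, Gterm n x)
  · intro N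
    exact Finset.measurable_sum _ (fun n _ => (by unfold Gterm; fun_prop : Continuous (Gterm n)).measurable)
  · rw [tendsto_pi_nhds]
    intro x
    exact (G_summable x).hasSum.tendsto_sum_nat

open MeasureTheory Real

lemma summable_aux {r : ℝ} (h0 : 0 ≤ r) (h1 : r < 1) :
    Summable (fun n : ℕ => ((n : ℝ) + 1) ^ 4 * r ^ n) := by
  have h := summable_pow_mul_geometric_of_norm_lt_one (R := ℝ) 4
    (by rwa [Real.norm_eq_abs, abs_of_nonneg h0])
  have hs : Summable (fun n : ℕ => (16 * (n : ℝ) ^ 4 + 16) * r ^ n) := by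
    simpa [add_mul, mul_assoc] using
      (h.mul_left 16).add ((summable_geometric_of_lt_one h0 h1).mul_left 16)
  refine hs.of_nonneg_of_le (fun n => by positivity) (fun n => ?_)
  have hn : ((n : ℝ) + 1) ^ 4 ≤ 16 * (n : ℝ) ^ 4 + 16 := by
    rcases Nat.eq_zero_or_pos n with h | h
    · subst h; norm_num
    · have h1n : (1 : ℝ) ≤ n := by exact_mod_cast h
      nlinarith [sq_nonneg ((n:ℝ) - 1), sq_nonneg ((n:ℝ)^2 - 1)]
  exact mul_le_mul_of_nonneg_right hn (pow_nonneg h0 n)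

lemma norm_exp_le_exp_norm (z : ℂ) : ‖Complex.exp z‖ ≤ Real.exp ‖z‖ := by
  rw [Complex.norm_exp]
  exact Real.exp_le_exp.2 (Complex.re_le_norm z)

lemma norm_cosh_le (z : ℂ) : ‖Complex.cosh z‖ ≤ Real.exp ‖z‖ := by
  have h1 := norm_exp_le_exp_norm z
  have h2 := norm_exp_le_exp_norm (-z)
  rw [norm_neg] at h2
  rw [Complex.cosh]
  calc ‖(Complex.exp z + Complex.exp (-z)) / 2‖ = ‖Complex.exp z + Complex.exp (-z)‖ / 2 := by
        rw [norm_div]; norm_num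
    _ ≤ (Real.exp ‖z‖ + Real.exp ‖z‖) / 2 := by
        have := norm_add_le (Complex.exp z) (Complex.exp (-z)); gcongr; linarith
    _ = Real.exp ‖z‖ := by ring

lemma norm_sinh_le (z : ℂ) : ‖Complex.sinh z‖ ≤ Real.exp ‖z‖ := by
  have h1 := norm_exp_le_exp_norm z
  have h2 := norm_exp_le_exp_norm (-z)
  rw [norm_neg] at h2
  rw [Complex.sinh]
  calc ‖(Complex.exp z - Complex.exp (-z)) / 2‖ = ‖Complex.exp z - Complex.exp (-z)‖ / 2 := by
        rw [norm_div]; norm_num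
    _ ≤ (Real.exp ‖z‖ + Real.exp ‖z‖) / 2 := by
        have := norm_sub_le (Complex.exp z) (Complex.exp (-z)); gcongr; linarith
    _ = Real.exp ‖z‖ := by ring


open Real in
/-- `M t` is entire. -/
theorem M_entire (t : ℝ) : Differentiable ℂ (M t) := by
  intro τ₀
  set μ := (volume : Measure ℝ).restrict (Set.Ioi 0) with hμ
  set F : ℂ → ℝ → ℂ := fun τ x =>
    ((Real.exp (-(t * x ^ 2)) * G x : ℝ) : ℂ) * Complex.cosh (τ * (x : ℂ)) with hF
  set F' : ℂ → ℝ → ℂ := fun τ x =>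
    ((Real.exp (-(t * x ^ 2)) * G x : ℝ) : ℂ) * (Complex.sinh (τ * (x : ℂ)) * (x : ℂ)) with hF'
  set r : ℝ := ‖τ₀‖ + 1 with hr
  have hr0 : (0:ℝ) ≤ r := by positivity
  set bound : ℝ → ℝ := fun x =>
    CG * Real.exp (|t| * x ^ 2 + (10 + r) * x - Real.pi * Real.exp (4 * x)) with hbnd
  have hB0 : ∀ x : ℝ, 0 ≤ bound x := fun x => mul_nonneg CG_nonneg (Real.exp_nonneg _)
  -- measurability
  have hCmeas : Measurable fun x : ℝ => ((Real.exp (-(t * x ^ 2)) * G x : ℝ) : ℂ) := by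
    apply Complex.measurable_ofReal.comp
    exact (Real.measurable_exp.comp (by fun_prop)).mul G_measurable
  have hmeas : ∀ τ : ℂ, AEStronglyMeasurable (F τ) μ := fun τ => by
    apply Measurable.aestronglyMeasurable
    exact hCmeas.mul (Complex.continuous_cosh.comp (by continuity)).measurable
  have hmeas' : AEStronglyMeasurable (F' τ₀) μ := by
    apply Measurable.aestronglyMeasurable
    exact hCmeas.mul (((Complex.continuous_sinh.comp (by continuity)).mul
      Complex.continuous_ofReal).measurable)
  -- core norm bound
  have hGx : ∀ x : ℝ, 0 < x → ‖((Real.exp (-(t * x ^ 2)) * G x : ℝ) : ℂ)‖ ≤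
      Real.exp (|t| * x ^ 2) * (CG * Real.exp (9 * x - Real.pi * Real.exp (4 * x))) := by
    intro x hx
    rw [Complex.norm_real, Real.norm_eq_abs, abs_mul, Real.abs_exp]
    apply mul_le_mul _ (G_bound hx.le) (abs_nonneg _) (Real.exp_nonneg _)
    apply Real.exp_le_exp.2
    nlinarith [mul_le_mul_of_nonneg_right (neg_le_abs t) (sq_nonneg x)]
  have hxexp : ∀ x : ℝ, 0 < x → x ≤ Real.exp x := fun x hx => by
    linarith [Real.add_one_le_exp x]
  -- bound for F
  have hFbound : ∀ x : ℝ, 0 < x → ∀ τ : ℂ, ‖τ‖ ≤ r → ‖F τ x‖ ≤ bound x := by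
    intro x hx τ hτ
    rw [hF]
    simp only
    rw [norm_mul]
    have hcosh : ‖Complex.cosh (τ * (x : ℂ))‖ ≤ Real.exp (r * x) := by
      refine (norm_cosh_le _).trans (Real.exp_le_exp.2 ?_)
      rw [norm_mul, Complex.norm_real, Real.norm_eq_abs, abs_of_pos hx]
      exact mul_le_mul_of_nonneg_right hτ hx.le
    calc ‖((Real.exp (-(t * x ^ 2)) * G x : ℝ) : ℂ)‖ * ‖Complex.cosh (τ * (x : ℂ))‖
        ≤ (Real.exp (|t| * x ^ 2) * (CG * Real.exp (9 * x - Real.pi * Real.exp (4 * x))))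
          * Real.exp (r * x) := by
          apply mul_le_mul (hGx x hx) hcosh (norm_nonneg _)
            (mul_nonneg (Real.exp_nonneg _) (mul_nonneg CG_nonneg (Real.exp_nonneg _)))
      _ = CG * (Real.exp (|t| * x ^ 2) * Real.exp (9 * x - Real.pi * Real.exp (4 * x))
          * Real.exp (r * x)) := by ring
      _ = CG * Real.exp (|t| * x ^ 2 + (9 * x - Real.pi * Real.exp (4 * x)) + r * x) := by
          rw [← Real.exp_add, ← Real.exp_add]
      _ ≤ bound x := by
          have h9 : (|t| * x ^ 2 + (9 * x - Real.pi * Real.exp (4 * x)) + r * x)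
              ≤ (|t| * x ^ 2 + (10 + r) * x - Real.pi * Real.exp (4 * x)) := by nlinarith
          exact mul_le_mul_of_nonneg_left (Real.exp_le_exp.2 h9) CG_nonneg
  -- bound for F'
  have hF'bound : ∀ x : ℝ, 0 < x → ∀ τ : ℂ, ‖τ‖ ≤ r → ‖F' τ x‖ ≤ bound x := by
    intro x hx τ hτ
    rw [hF']
    simp only
    rw [norm_mul, norm_mul]
    have hsinh : ‖Complex.sinh (τ * (x : ℂ))‖ ≤ Real.exp (r * x) := by
      refine (norm_sinh_le _).trans (Real.exp_le_exp.2 ?_)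
      rw [norm_mul, Complex.norm_real, Real.norm_eq_abs, abs_of_pos hx]
      exact mul_le_mul_of_nonneg_right hτ hx.le
    have hxx : ‖((x : ℝ) : ℂ)‖ ≤ Real.exp x := by
      rw [Complex.norm_real, Real.norm_eq_abs, abs_of_pos hx]
      exact hxexp x hx
    calc ‖((Real.exp (-(t * x ^ 2)) * G x : ℝ) : ℂ)‖
          * (‖Complex.sinh (τ * (x : ℂ))‖ * ‖((x : ℝ) : ℂ)‖)
        ≤ (Real.exp (|t| * x ^ 2) * (CG * Real.exp (9 * x - Real.pi * Real.exp (4 * x))))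
          * (Real.exp (r * x) * Real.exp x) := by
          apply mul_le_mul (hGx x hx) _ (mul_nonneg (norm_nonneg _) (norm_nonneg _))
            (mul_nonneg (Real.exp_nonneg _) (mul_nonneg CG_nonneg (Real.exp_nonneg _)))
          exact mul_le_mul hsinh hxx (norm_nonneg _) (Real.exp_nonneg _)
      _ = CG * (Real.exp (|t| * x ^ 2) * Real.exp (9 * x - Real.pi * Real.exp (4 * x))
          * (Real.exp (r * x) * Real.exp x)) := by ring
      _ = CG * Real.exp (|t| * x ^ 2 + (9 * x - Real.pi * Real.exp (4 * x)) + (r * x + x)) := by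
          rw [← Real.exp_add, ← Real.exp_add, ← Real.exp_add]
      _ ≤ bound x := by
          have h9 : (|t| * x ^ 2 + (9 * x - Real.pi * Real.exp (4 * x)) + (r * x + x))
              ≤ (|t| * x ^ 2 + (10 + r) * x - Real.pi * Real.exp (4 * x)) := by nlinarith
          exact mul_le_mul_of_nonneg_left (Real.exp_le_exp.2 h9) CG_nonneg
  -- integrability of bound
  have hb_int : Integrable bound μ := by
    set C₀ : ℝ := t ^ 2 + (11 + r) ^ 2 + 1 with hC₀
    have hg : Integrable (fun x : ℝ => (CG * Real.exp C₀) * Real.exp (-x)) μ := by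
      have h0 := exp_neg_integrableOn_Ioi 0 (one_pos)
      simp only [neg_mul, one_mul] at h0
      exact (h0.const_mul _)
    apply hg.mono ((by fun_prop : Continuous bound).aestronglyMeasurable)
    rw [hμ, ae_restrict_iff' measurableSet_Ioi]
    filter_upwards with x hx
    have hx4 : x ^ 4 ≤ Real.exp (4 * x) := by
      have h1 : x ≤ Real.exp x := hxexp x hx
      have h2 : x ^ 4 ≤ Real.exp x ^ 4 := pow_le_pow_left₀ hx.le h1 4
      have h3 : Real.exp x ^ 4 = Real.exp (4 * x) := by
        rw [← Real.exp_nat_mul]; norm_num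
      linarith
    have hexp : |t| * x ^ 2 + (10 + r) * x - Real.pi * Real.exp (4 * x) ≤ C₀ - x := by
      have hpi := Real.pi_gt_three
      have hE0 : (0:ℝ) ≤ Real.exp (4 * x) := Real.exp_nonneg _
      have h1 : 2 * (|t| * x ^ 2) ≤ x ^ 4 + t ^ 2 := by
        nlinarith [sq_nonneg (x ^ 2 - |t|), sq_abs t]
      have h2 : 2 * ((11 + r) * x) ≤ x ^ 2 + (11 + r) ^ 2 := by
        nlinarith [sq_nonneg (x - (11 + r))]
      have h3 : 2 * x ^ 2 ≤ x ^ 4 + 1 := by nlinarith [sq_nonneg (x ^ 2 - 1)]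
      have h4 : 3 * x ^ 4 ≤ Real.pi * Real.exp (4 * x) := by nlinarith
      nlinarith [h1, h2, h3, h4]
    rw [Real.norm_eq_abs, Real.norm_eq_abs]
    rw [abs_of_nonneg (hB0 x), abs_of_nonneg (mul_nonneg (mul_nonneg CG_nonneg
      (Real.exp_nonneg _)) (Real.exp_nonneg _))]
    calc bound x ≤ CG * Real.exp (C₀ - x) :=
          mul_le_mul_of_nonneg_left (Real.exp_le_exp.2 hexp) CG_nonneg
      _ = CG * Real.exp C₀ * Real.exp (-x) := by
          rw [show C₀ - x = C₀ + -x by ring, Real.exp_add]; ring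
  -- integrability of F τ₀
  have hF_int : Integrable (F τ₀) μ := by
    apply hb_int.mono (hmeas τ₀)
    rw [hμ, ae_restrict_iff' measurableSet_Ioi]
    filter_upwards with x hx
    rw [Real.norm_eq_abs, abs_of_nonneg (hB0 x)]
    exact hFbound x hx τ₀ (by rw [hr]; linarith)
  -- bound for F' a.e.
  have h_bound : ∀ᵐ x ∂μ, ∀ τ ∈ Metric.ball τ₀ 1, ‖F' τ x‖ ≤ bound x := by
    rw [hμ, ae_restrict_iff' measurableSet_Ioi]
    filter_upwards with x hx τ hτ
    apply hF'bound x hx τ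
    have := mem_ball_iff_norm.1 hτ
    calc ‖τ‖ = ‖τ₀ + (τ - τ₀)‖ := by ring_nf
      _ ≤ ‖τ₀‖ + ‖τ - τ₀‖ := norm_add_le _ _
      _ ≤ r := by rw [hr]; linarith
  -- differentiability
  have h_diff : ∀ᵐ x ∂μ, ∀ τ ∈ Metric.ball τ₀ 1, HasDerivAt (fun τ => F τ x) (F' τ x) τ := by
    filter_upwards with x τ _
    have h1 : HasDerivAt (fun τ : ℂ => Complex.cosh (τ * (x : ℂ)))
        (Complex.sinh (τ * (x : ℂ)) * (x : ℂ)) τ := by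
      have := (Complex.hasDerivAt_cosh (τ * (x : ℂ))).comp τ (hasDerivAt_mul_const (x : ℂ))
      exact this
    exact h1.const_mul _
  have key := hasDerivAt_integral_of_dominated_loc_of_deriv_le (Metric.ball_mem_nhds τ₀ one_pos)
    (Filter.Eventually.of_forall hmeas) hF_int hmeas' h_bound hb_int h_diff
  exact key.2.differentiableAt
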